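/- arXiv:2004.07671 — 3 statements merged into one kernel-verified Lean document; each statement's English description precedes it below -/
import Mathlib

section
/- In the setting of the disjoint-paths lemma, let G be a finite graph with vertex coloring χ: V(G) → C, C = {c_1, …, c_s}, and let T be the path c_1—c_2—…—c_s; suppose G[χ^{-1}(c_i), χ^{-1}(c_{i+1})] is non-empty and biregular for every i ∈ [s−1]; let H_1, …, H_k be pairwise vertex-disjoint subgraphs of G each agreeing with T, and let X ⊆ χ^{-1}(c_1) \ V_{c_1}(H_1,…,H_k). Define the forward arcs E_fw as the pairs (v,w) with vw ∈ E(G) \ ⋃_{j∈[k]} E(H_j), χ(v) = c_i and χ(w) = c_{i+1} for some i ∈ [s−1], and the backward arcs E_bw as the pairs (v,w) with vw ∈ ⋃_{j∈[k]} E(H_j), χ(v) = c_{i+1} and χ(w) = c_i for some i ∈ [s−1]. Call a path v_1, …, v_t in G admissible if v_1 ∈ X, (v_i, v_{i+1}) ∈ E_fw ∪ E_bw for all i ∈ [t−1], and whenever (v_i, v_{i+1}) ∈ E_fw and v_{i+1} ∈ ⋃_{j∈[k]} V(H_j), then i ≤ t−2 and (v_{i+1}, v_{i+2}) ∈ E_bw.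 Then every vertex v ∈ χ^{-1}(c_s) that is the last vertex of some admissible path belongs to W_{X,c_s}, i.e., there exist k+1 pairwise vertex-disjoint subgraphs H'_1, …, H'_{k+1} of G, each agreeing with T, such that V_{c_1}(H'_1,…,H'_{k+1}) = V_{c_1}(H_1,…,H_k) ∪ {x} for some x ∈ X and V_{c_s}(H'_1,…,H'_{k+1}) = V_{c_s}(H_1,…,H_k) ∪ {v}. -/
/-- A subgraph `H ⊆ G` agrees with the graph `T` on the color set `C` if the coloring `χ`
restricted to the vertices of `H` is a graph isomorphism from `H` to `T`; in particular
`H` has exactly one vertex of each color. -/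
def AgreesWith {V C : Type} (G : SimpleGraph V) (χ : V → C) (T : SimpleGraph C)
    (H : G.Subgraph) : Prop :=
  Set.InjOn χ H.verts ∧ (∀ c : C, ∃ v ∈ H.verts, χ v = c) ∧
    ∀ u ∈ H.verts, ∀ v ∈ H.verts, (H.Adj u v ↔ T.Adj (χ u) (χ v))

/-- `V_c(H_1, …, H_k)`: the vertices of color `c` appearing in one of the subgraphs `H i`. -/
def Vcol {V C : Type} {G : SimpleGraph V} {k : ℕ} (χ : V → C)
    (H : Fin k → G.Subgraph) (c : C) : Set V :=
  {v | (∃ i, v ∈ (H i).verts) ∧ χ v = c}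

/-- The bipartite graph `G[χ⁻¹(c), χ⁻¹(c')]` between the color classes of `c` and `c'`
is non-empty and biregular. -/
def BiregularBetween {V C : Type} (G : SimpleGraph V) (χ : V → C) (c c' : C) : Prop :=
  (∃ u v, G.Adj u v ∧ χ u = c ∧ χ v = c') ∧
  (∃ d1, ∀ u, χ u = c → ({v | G.Adj u v ∧ χ v = c'} : Set V).ncard = d1) ∧
  (∃ d2, ∀ v, χ v = c' → ({u | G.Adj u v ∧ χ u = c} : Set V).ncard = d2)

/-- The extension set `W_{X,c_s}` for pairwise disjoint path systems `H : Fin k → G.Subgraph`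
agreeing with the path `c_0 — c_1 — ⋯ — c_s` and `X ⊆ χ⁻¹(c_0) \ V_{c_0}(H)`. -/
def ExtSetPath {V : Type} {s k : ℕ} {G : SimpleGraph V} (χ : V → Fin (s + 1))
    (H : Fin k → G.Subgraph) (X : Set V) : Set V :=
  {v | χ v = Fin.last s ∧ ∃ H' : Fin (k + 1) → G.Subgraph,
    (∀ i, AgreesWith G χ (SimpleGraph.pathGraph (s + 1)) (H' i)) ∧
    (Pairwise fun i j => Disjoint (H' i).verts (H' j).verts) ∧
    (∃ x ∈ X, Vcol χ H' 0 = Vcol χ H 0 ∪ {x}) ∧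
    Vcol χ H' (Fin.last s) = Vcol χ H (Fin.last s) ∪ {v}}

/-- Forward arcs: edges of `G` not used by any `H j`, directed from color class `c_i`
to color class `c_{i+1}`. -/
def Efw {V : Type} {s k : ℕ} {G : SimpleGraph V} (χ : V → Fin (s + 1))
    (H : Fin k → G.Subgraph) (v w : V) : Prop :=
  G.Adj v w ∧ (∀ j, ¬ (H j).Adj v w) ∧ ∃ i : Fin s, χ v = i.castSucc ∧ χ w = i.succ

/-- Backward arcs: edges used by some `H j`, directed from color class `c_{i+1}`
to color class `c_i`. -/
def Ebw {V : Type} {s k : ℕ} {G : SimpleGraph V} (χ : V → Fin (s + 1))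
    (H : Fin k → G.Subgraph) (v w : V) : Prop :=
  (∃ j, (H j).Adj v w) ∧ ∃ i : Fin s, χ v = i.succ ∧ χ w = i.castSucc

section Aux
variable {V : Type} {s : ℕ} {G : SimpleGraph V} {χ : V → Fin (s+1)}

noncomputable def avtx {T : SimpleGraph (Fin (s+1))} {H₀ : G.Subgraph}
    (h : AgreesWith G χ T H₀) (c : Fin (s+1)) : V := (h.2.1 c).choose

lemma avtx_mem {T : SimpleGraph (Fin (s+1))} {H₀ : G.Subgraph}
    (h : AgreesWith G χ T H₀) (c : Fin (s+1)) : avtx h c ∈ H₀.verts :=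
  (h.2.1 c).choose_spec.1

lemma avtx_color {T : SimpleGraph (Fin (s+1))} {H₀ : G.Subgraph}
    (h : AgreesWith G χ T H₀) (c : Fin (s+1)) : χ (avtx h c) = c :=
  (h.2.1 c).choose_spec.2

lemma avtx_unique {T : SimpleGraph (Fin (s+1))} {H₀ : G.Subgraph}
    (h : AgreesWith G χ T H₀) {c : Fin (s+1)} {w : V} (hw : w ∈ H₀.verts)
    (hc : χ w = c) : w = avtx h c :=
  h.1 hw (avtx_mem h c) (by rw [hc, avtx_color h c])

lemma avtx_inj {T : SimpleGraph (Fin (s+1))} {H₀ : G.Subgraph}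
    (h : AgreesWith G χ T H₀) {c c' : Fin (s+1)} (hcc : avtx h c = avtx h c') :
    c = c' := by
  have h1 := avtx_color h c
  rw [hcc, avtx_color h c'] at h1; exact h1.symm

lemma avtx_adj {H₀ : G.Subgraph}
    (h : AgreesWith G χ (SimpleGraph.pathGraph (s+1)) H₀) {c c' : Fin (s+1)}
    (hcc : (c : ℕ) + 1 = (c' : ℕ)) : H₀.Adj (avtx h c) (avtx h c') := by
  rw [h.2.2 _ (avtx_mem h c) _ (avtx_mem h c'), avtx_color h c, avtx_color h c',
    SimpleGraph.pathGraph_adj]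
  exact Or.inl hcc

def pathSub (f : Fin (s+1) → V)
    (hadj : ∀ i : Fin s, G.Adj (f i.castSucc) (f i.succ)) : G.Subgraph where
  verts := Set.range f
  Adj u v := ∃ i : Fin s, (u = f i.castSucc ∧ v = f i.succ) ∨ (u = f i.succ ∧ v = f i.castSucc)
  adj_sub := by
    rintro u v ⟨i, (⟨rfl, rfl⟩ | ⟨rfl, rfl⟩)⟩
    · exact hadj i
    · exact (hadj i).symm
  edge_vert := by
    rintro u v ⟨i, (⟨rfl, -⟩ | ⟨rfl, -⟩)⟩ <;> exact Set.mem_range_self _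
  symm := by
    constructor
    rintro u v ⟨i, (⟨rfl, rfl⟩ | ⟨rfl, rfl⟩)⟩
    · exact ⟨i, Or.inr ⟨rfl, rfl⟩⟩
    · exact ⟨i, Or.inl ⟨rfl, rfl⟩⟩

lemma pathSub_verts (f : Fin (s+1) → V)
    (hadj : ∀ i : Fin s, G.Adj (f i.castSucc) (f i.succ)) :
    (pathSub f hadj).verts = Set.range f := rfl

lemma pathSub_agrees (f : Fin (s+1) → V)
    (hadj : ∀ i : Fin s, G.Adj (f i.castSucc) (f i.succ))
    (hχ : ∀ c, χ (f c) = c) :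
    AgreesWith G χ (SimpleGraph.pathGraph (s+1)) (pathSub f hadj) := by
  have finj : Function.Injective f := by
    intro a b hab
    have := hχ a; rw [hab, hχ b] at this; exact this.symm
  refine ⟨?_, ?_, ?_⟩
  · rintro u ⟨a, rfl⟩ v ⟨b, rfl⟩ h
    rw [hχ, hχ] at h; rw [h]
  · intro c; exact ⟨f c, Set.mem_range_self _, hχ c⟩
  · rintro u ⟨a, rfl⟩ v ⟨b, rfl⟩
    rw [SimpleGraph.pathGraph_adj, hχ, hχ]
    constructor
    · rintro ⟨i, (⟨ha, hb⟩ | ⟨ha, hb⟩)⟩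
      · rw [finj ha, finj hb]; left; simp
      · rw [finj ha, finj hb]; right; simp
    · rintro (h | h)
      · have ha : (a : ℕ) < s := by omega
        refine ⟨⟨a, ha⟩, Or.inl ⟨rfl, ?_⟩⟩
        congr 1; exact Fin.ext (by simp only [Fin.val_succ]; omega)
      · have hb : (b : ℕ) < s := by omega
        refine ⟨⟨b, hb⟩, Or.inr ⟨?_, rfl⟩⟩
        congr 1; exact Fin.ext (by simp only [Fin.val_succ]; omega)

lemma extend_system {k : ℕ} (H : Fin k → G.Subgraph) (P : G.Subgraph)
    (hagree : ∀ i, AgreesWith G χ (SimpleGraph.pathGraph (s+1)) (H i))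
    (hP : AgreesWith G χ (SimpleGraph.pathGraph (s+1)) P)
    (hdisj : Pairwise fun i j => Disjoint (H i).verts (H j).verts)
    (hPd : ∀ j, Disjoint P.verts (H j).verts) :
    ∃ H' : Fin (k+1) → G.Subgraph,
      (∀ i, AgreesWith G χ (SimpleGraph.pathGraph (s+1)) (H' i)) ∧
      (Pairwise fun i j => Disjoint (H' i).verts (H' j).verts) ∧
      ∀ c, Vcol χ H' c = Vcol χ H c ∪ {w | w ∈ P.verts ∧ χ w = c} := by
  refine ⟨fun i => if h : (i : ℕ) < k then H ⟨i, h⟩ else P, ?_, ?_, ?_⟩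
  · intro i; dsimp only; split
    · exact hagree _
    · exact hP
  · intro i j hij; dsimp only; split <;> split
    · apply hdisj; simp only [ne_eq, Fin.ext_iff]; exact fun h => hij (Fin.ext h)
    · exact (hPd _).symm
    · exact hPd _
    · exfalso; apply hij; apply Fin.ext; omega
  · intro c; ext w
    simp only [Vcol, Set.mem_setOf_eq, Set.mem_union]
    constructor
    · rintro ⟨⟨i, hi⟩, hw⟩
      by_cases h : (i : ℕ) < k
      · rw [dif_pos h] at hi; exact Or.inl ⟨⟨_, hi⟩, hw⟩
      · rw [dif_neg h] at hi; exact Or.inr ⟨hi, hw⟩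
    · rintro (⟨⟨i, hi⟩, hw⟩ | ⟨hi, hw⟩)
      · refine ⟨⟨⟨(i : ℕ), by omega⟩, ?_⟩, hw⟩
        rw [dif_pos i.2]; exact hi
      · refine ⟨⟨⟨k, by omega⟩, ?_⟩, hw⟩
        rw [dif_neg (Nat.lt_irrefl k)]; exact hi

end Aux

/-- Claim 4.4: in the setting of the disjoint-paths lemma, every vertex of the last color
class that is the endpoint of an admissible alternating path (starting in `X`, using
forward and backward arcs, and leaving a used path immediately along a backward arc after
entering it by a forward arc) belongs to the extension set `W_{X,c_s}`. -/
theorem endpoint_of_admissible_path_mem_extension_set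
    {V : Type} [Fintype V] {s k : ℕ} (G : SimpleGraph V) (χ : V → Fin (s + 1))
    (hbireg : ∀ i : Fin s, BiregularBetween G χ i.castSucc i.succ)
    (H : Fin k → G.Subgraph)
    (hagree : ∀ i, AgreesWith G χ (SimpleGraph.pathGraph (s + 1)) (H i))
    (hdisj : Pairwise fun i j => Disjoint (H i).verts (H j).verts)
    (X : Set V) (hX : X ⊆ {v | χ v = 0} \ Vcol χ H 0)
    (v : V) (hv : χ v = Fin.last s)
    (t : ℕ) (p : ℕ → V)
    (hinj : Set.InjOn p {i | i ≤ t})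
    (hstart : p 0 ∈ X) (hend : p t = v)
    (harc : ∀ i < t, Efw χ H (p i) (p (i + 1)) ∨ Ebw χ H (p i) (p (i + 1)))
    (hadm : ∀ i < t, Efw χ H (p i) (p (i + 1)) → (∃ j, p (i + 1) ∈ (H j).verts) →
      i + 1 < t ∧ Ebw χ H (p (i + 1)) (p (i + 2))) :
    v ∈ ExtSetPath χ H X := by
  classical
  induction t using Nat.strong_induction_on generalizing H X p with
  | _ t IH =>
  have hχ0 : χ (p 0) = 0 := (hX hstart).1
  have hp0H : ∀ j, p 0 ∉ (H j).verts := fun j hj => (hX hstart).2 ⟨⟨j, hj⟩, hχ0⟩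
  have notboth : ∀ a b : V, Efw χ H a b → Ebw χ H a b → False := by
    rintro a b hf ⟨⟨j0, hj0⟩, -⟩
    exact hf.2.1 j0 hj0
  have pinj : ∀ a b : ℕ, a ≤ t → b ≤ t → p a = p b → a = b := by
    intro a b ha hb hab
    exact hinj ha hb hab
  by_cases hbw : ∃ m, m < t ∧ Ebw χ H (p m) (p (m+1))
  · -- inductive step
    have hmlt : Nat.find hbw < t := (Nat.find_spec hbw).1
    have hmbw : Ebw χ H (p (Nat.find hbw)) (p (Nat.find hbw + 1)) := (Nat.find_spec hbw).2
    set m := Nat.find hbw with hm_def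
    have allfw : ∀ i, i < m → Efw χ H (p i) (p (i+1)) := by
      intro i hi
      rcases harc i (by omega) with h | h
      · exact h
      · exact absurd ⟨by omega, h⟩ (Nat.find_min hbw hi)
    have colornat : ∀ i, i ≤ m → (χ (p i) : ℕ) = i := by
      intro i
      induction i with
      | zero => intro _; rw [hχ0]; rfl
      | succ n ihn =>
        intro hn
        obtain ⟨ii, h1, h2⟩ := (allfw n (by omega)).2.2
        have hv1 := ihn (by omega)
        rw [h1] at hv1
        rw [h2]
        simp only [Fin.val_succ]
        simp only [Fin.coe_castSucc] at hv1
        omega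
    obtain ⟨⟨j, hjadj⟩, ii, hii1, hii2⟩ := hmbw
    have hAj := hagree j
    have hmval : (χ (p m) : ℕ) = m := colornat m le_rfl
    have hm1 : 1 ≤ m := by
      have h1 := congrArg Fin.val hii1
      simp only [Fin.val_succ] at h1
      omega
    have hms : m ≤ s := by
      have h1 := congrArg Fin.val hii1
      simp only [Fin.val_succ] at h1
      have h2 := ii.2
      omega
    have hm1val : (χ (p (m+1)) : ℕ) = m - 1 := by
      have h1 := congrArg Fin.val hii1
      have h2 := congrArg Fin.val hii2
      simp only [Fin.val_succ] at h1
      simp only [Fin.coe_castSucc] at h2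
      omega
    have pm_mem : p m ∈ (H j).verts := hjadj.fst_mem
    have pm1_mem : p (m+1) ∈ (H j).verts := hjadj.snd_mem
    have pmu : p m = avtx hAj ⟨m, by omega⟩ := avtx_unique hAj pm_mem (Fin.ext hmval)
    have pm1u : p (m+1) = avtx hAj ⟨m-1, by omega⟩ :=
      avtx_unique hAj pm1_mem (Fin.ext hm1val)
    have hpnotH : ∀ i, i < m → ∀ j', p i ∉ (H j').verts := by
      intro i him j' hmem
      match i with
      | 0 => exact hp0H j' hmem
      | Nat.succ n =>
        obtain ⟨hlt, hb⟩ := hadm n (by omega) (allfw n (by omega)) ⟨j', hmem⟩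
        exact notboth _ _ (allfw (n+1) (by omega)) hb
    have hvnotH : ∀ j', p t ∉ (H j').verts := by
      intro j' hj'
      have h1t : t - 1 + 1 = t := by omega
      rcases harc (t-1) (by omega) with hf | hb
      · obtain ⟨hlt, -⟩ := hadm (t-1) (by omega) hf ⟨j', by rw [h1t]; exact hj'⟩
        omega
      · obtain ⟨-, ii2, -, h2⟩ := hb
        rw [h1t, hend, hv] at h2
        have h3 := congrArg Fin.val h2
        simp only [Fin.val_last, Fin.coe_castSucc] at h3
        have h4 := ii2.2
        omega
    set f : Fin (s+1) → V := fun c => if (c : ℕ) < m then p (c : ℕ) else avtx hAj c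
      with hf_def
    have fval_lt : ∀ c : Fin (s+1), (c : ℕ) < m → f c = p (c : ℕ) := by
      intro c h
      simp only [hf_def]
      rw [if_pos h]
    have fval_ge : ∀ c : Fin (s+1), m ≤ (c : ℕ) → f c = avtx hAj c := by
      intro c h
      simp only [hf_def]
      rw [if_neg (by omega)]
    have fadj : ∀ i2 : Fin s, G.Adj (f i2.castSucc) (f i2.succ) := by
      intro i2
      have hcs : (i2.castSucc : ℕ) = (i2 : ℕ) := rfl
      have hsc : (i2.succ : ℕ) = (i2 : ℕ) + 1 := rfl
      rcases Nat.lt_or_ge ((i2 : ℕ) + 1) m with h1 | h1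
      · rw [fval_lt _ (by omega), fval_lt _ (by rw [hsc]; omega)]
        rw [hcs, hsc]
        exact (allfw (i2 : ℕ) (by omega)).1
      · rcases Nat.lt_or_ge (i2 : ℕ) m with h2 | h2
        · -- (i2 : ℕ) + 1 = m
          rw [fval_lt _ (by rw [hcs]; omega), fval_ge _ (by rw [hsc]; omega)]
          have he : avtx hAj i2.succ = p m := by
            rw [pmu]
            congr 1
            exact Fin.ext (show (i2.succ : ℕ) = m by rw [hsc]; omega)
          rw [he, hcs]
          have hh := (allfw (i2 : ℕ) (by omega)).1
          have he2 : (i2 : ℕ) + 1 = m := by omega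
          rw [he2] at hh
          exact hh
        · rw [fval_ge _ (by rw [hcs]; omega), fval_ge _ (by rw [hsc]; omega)]
          exact (avtx_adj hAj rfl).adj_sub
    have fχ : ∀ c : Fin (s+1), χ (f c) = c := by
      intro c
      by_cases h : (c : ℕ) < m
      · rw [fval_lt _ h]
        exact Fin.ext (colornat _ (by omega))
      · rw [fval_ge _ (by omega)]
        exact avtx_color hAj c
    set P : G.Subgraph := pathSub f fadj with hP_def
    have hPagree : AgreesWith G χ (SimpleGraph.pathGraph (s+1)) P := pathSub_agrees f fadj fχ
    have hPverts : P.verts = Set.range f := rfl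
    have hrangef : ∀ w, w ∈ Set.range f →
        (∃ a, a < m ∧ w = p a) ∨ (∃ c : Fin (s+1), m ≤ (c : ℕ) ∧ w = avtx hAj c) := by
      rintro w ⟨c, rfl⟩
      by_cases h : (c : ℕ) < m
      · exact Or.inl ⟨(c : ℕ), h, fval_lt c h⟩
      · exact Or.inr ⟨c, by omega, fval_ge c (by omega)⟩
    set Htil : Fin k → G.Subgraph := fun j' => if j' = j then P else H j' with hHtil_def
    have Htil_j : Htil j = P := by simp [hHtil_def]
    have Htil_ne : ∀ j', j' ≠ j → Htil j' = H j' := by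
      intro j' h
      simp [hHtil_def, h]
    have hagree' : ∀ j', AgreesWith G χ (SimpleGraph.pathGraph (s+1)) (Htil j') := by
      intro j'
      by_cases h : j' = j
      · rw [h, Htil_j]; exact hPagree
      · rw [Htil_ne j' h]; exact hagree j'
    have uNotOther : ∀ (c : Fin (s+1)) (j2 : Fin k), j2 ≠ j → avtx hAj c ∉ (H j2).verts := by
      intro c j2 hne hmem
      exact Set.disjoint_left.mp (hdisj hne) hmem (avtx_mem hAj c)
    have hdisj' : Pairwise fun a b => Disjoint (Htil a).verts (Htil b).verts := by
      have key : ∀ j2, j2 ≠ j → Disjoint P.verts (H j2).verts := by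
        intro j2 hne
        rw [hPverts, Set.disjoint_left]
        intro w hw hmem
        rcases hrangef w hw with ⟨a, ha, rfl⟩ | ⟨c, hc, rfl⟩
        · exact hpnotH a ha j2 hmem
        · exact uNotOther c j2 hne hmem
      intro a b hab
      by_cases ha : a = j <;> by_cases hb : b = j
      · exact absurd (ha.trans hb.symm) hab
      · rw [ha, Htil_j, Htil_ne b hb]
        exact key b (fun h => hab (ha.trans h.symm))
      · rw [hb, Htil_j, Htil_ne a ha]
        exact (key a ha).symm
      · rw [Htil_ne a ha, Htil_ne b hb]
        exact hdisj hab
    set Q : ℕ → Prop := fun i => m + 1 ≤ i ∧ ∃ c : Fin (s+1), (c : ℕ) < m ∧ p i = avtx hAj c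
      with hQ_def
    have hQm1 : Q (m+1) := ⟨le_rfl, ⟨m-1, by omega⟩, (show m - 1 < m by omega), pm1u⟩
    set istar := Nat.findGreatest Q t with histar_def
    have histar1 : m + 1 ≤ istar := Nat.le_findGreatest (by omega) hQm1
    have histar_le : istar ≤ t := Nat.findGreatest_le t
    have histar_spec : Q istar := Nat.findGreatest_spec (by omega) hQm1
    have hmax : ∀ i2, istar < i2 → i2 ≤ t → ∀ c : Fin (s+1), (c : ℕ) < m →
        p i2 ≠ avtx hAj c := by
      intro i2 h1 h2 c hc heq
      exact Nat.findGreatest_is_greatest h1 h2 ⟨by omega, c, hc, heq⟩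
    obtain ⟨-, cst, hcstm, hpistar⟩ := histar_spec
    have histar_lt : istar < t := by
      rcases Nat.lt_or_ge istar t with h | h
      · exact h
      · exfalso
        have he : istar = t := by omega
        rw [he] at hpistar
        exact hvnotH j (by rw [hpistar]; exact avtx_mem hAj cst)
    set cv := (cst : ℕ) with hcv_def
    set q : ℕ → V := fun r => if h : r < cv then avtx hAj ⟨r, by omega⟩
      else p (istar + r - cv) with hq_def
    set tq := cv + (t - istar) with htq_def
    have htq_lt : tq < t := by omega
    have qlt : ∀ r (h : r < cv), q r = avtx hAj ⟨r, by omega⟩ := by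
      intro r h
      simp only [hq_def]
      rw [dif_pos h]
    have qge : ∀ r, cv ≤ r → q r = p (istar + r - cv) := by
      intro r h
      simp only [hq_def]
      rw [dif_neg (by omega)]
    have qcv : q cv = p istar := by
      rw [qge cv le_rfl]
      congr 1
      omega
    have quval : ∀ r (h : r ≤ cv), q r = avtx hAj ⟨r, by omega⟩ := by
      intro r h
      rcases Nat.lt_or_ge r cv with h1 | h1
      · exact qlt r h1
      · have e : q r = p istar := by
          rw [qge r (by omega)]
          congr 1
          omega
        rw [e, hpistar]
        congr 1
        exact Fin.ext (show cv = r by omega)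
    have hqend : q tq = v := by
      rw [qge tq (by omega)]
      have e : istar + tq - cv = t := by omega
      rw [e, hend]
    have hstartq : q 0 ∈ ({avtx hAj 0} : Set V) := by
      rw [Set.mem_singleton_iff, quval 0 (by omega)]
      exact congrArg (avtx hAj) (Fin.ext (Fin.val_zero (s+1)).symm)
    have hinjq : Set.InjOn q {i | i ≤ tq} := by
      intro r1 hr1 r2 hr2 heq
      simp only [Set.mem_setOf_eq] at hr1 hr2
      rcases Nat.lt_or_ge r1 cv with h1 | h1 <;> rcases Nat.lt_or_ge r2 cv with h2 | h2
      · rw [qlt r1 h1, qlt r2 h2] at heq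
        have h3 := avtx_inj hAj heq
        have h4 : r1 = r2 := congrArg Fin.val h3
        exact h4
      · exfalso
        rw [qlt r1 h1, qge r2 h2] at heq
        rcases Nat.lt_or_ge istar (istar + r2 - cv) with hc | hc
        · exact hmax (istar + r2 - cv) hc (by omega) ⟨r1, by omega⟩
            (show r1 < m by omega) heq.symm
        · have e : istar + r2 - cv = istar := by omega
          rw [e, hpistar] at heq
          have h3 := avtx_inj hAj heq.symm
          have h4 : r1 = cv := (congrArg Fin.val h3).symm
          omega
      · exfalso
        rw [qge r1 h1, qlt r2 h2] at heq
        rcases Nat.lt_or_ge istar (istar + r1 - cv) with hc | hc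
        · exact hmax (istar + r1 - cv) hc (by omega) ⟨r2, by omega⟩
            (show r2 < m by omega) heq
        · have e : istar + r1 - cv = istar := by omega
          rw [e, hpistar] at heq
          have h3 := avtx_inj hAj heq
          have h4 : r2 = cv := (congrArg Fin.val h3).symm
          omega
      · rw [qge r1 h1, qge r2 h2] at heq
        have h3 := pinj _ _ (by omega) (by omega) heq
        omega
    have uLowNot : ∀ (c0 : Fin (s+1)), (c0 : ℕ) < m → ∀ j2,
        avtx hAj c0 ∉ (Htil j2).verts := by
      intro c0 hc0 j2 hmem
      by_cases hj2 : j2 = j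
      · rw [hj2, Htil_j, hPverts] at hmem
        rcases hrangef _ hmem with ⟨a, ha, heq⟩ | ⟨c, hc, heq⟩
        · exact hpnotH a ha j (by rw [← heq]; exact avtx_mem hAj _)
        · have h3 := avtx_inj hAj heq
          have hval : (c0 : ℕ) = (c : ℕ) := congrArg Fin.val h3
          omega
      · rw [Htil_ne j2 hj2] at hmem
        exact uNotOther c0 j2 hj2 hmem
    have notPadj : ∀ i2, istar ≤ i2 → i2 < t → (∀ j2, ¬ (H j2).Adj (p i2) (p (i2+1))) →
        ¬ P.Adj (p i2) (p (i2+1)) := by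
      intro i2 hge hlt hnadj hPadj
      obtain ⟨ii2, hor⟩ := hPadj
      have hcs : (ii2.castSucc : ℕ) = (ii2 : ℕ) := rfl
      have hsc : (ii2.succ : ℕ) = (ii2 : ℕ) + 1 := rfl
      rcases Nat.lt_or_ge ((ii2 : ℕ) + 1) m with hc1 | hc1
      · have e1 : f ii2.castSucc = p (ii2 : ℕ) := by
          rw [fval_lt _ (by rw [hcs]; omega), hcs]
        have e2 : f ii2.succ = p ((ii2 : ℕ) + 1) := by
          rw [fval_lt _ (by rw [hsc]; omega), hsc]
        rcases hor with ⟨h1, h2⟩ | ⟨h1, h2⟩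
        · rw [e1] at h1
          have h3 := pinj _ _ (by omega) (by omega) h1
          omega
        · rw [e2] at h1
          have h3 := pinj _ _ (by omega) (by omega) h1
          omega
      · rcases Nat.lt_or_ge (ii2 : ℕ) m with hc2 | hc2
        · have e2 : f ii2.succ = p m := by
            rw [fval_ge _ (by rw [hsc]; omega)]
            rw [pmu]
            congr 1
            exact Fin.ext (show (ii2.succ : ℕ) = m by rw [hsc]; omega)
          rcases hor with ⟨h1, h2⟩ | ⟨h1, h2⟩
          · rw [e2] at h2
            have h3 := pinj _ _ (by omega) (by omega) h2
            omega
          · rw [e2] at h1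
            have h3 := pinj _ _ (by omega) (by omega) h1
            omega
        · have e1 : f ii2.castSucc = avtx hAj ii2.castSucc :=
            fval_ge _ (by rw [hcs]; omega)
          have e2 : f ii2.succ = avtx hAj ii2.succ :=
            fval_ge _ (by rw [hsc]; omega)
          have hadj2 : (H j).Adj (avtx hAj ii2.castSucc) (avtx hAj ii2.succ) :=
            avtx_adj hAj rfl
          rcases hor with ⟨h1, h2⟩ | ⟨h1, h2⟩
          · rw [e1] at h1
            rw [e2] at h2
            rw [← h1, ← h2] at hadj2
            exact hnadj j hadj2
          · rw [e2] at h1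
            rw [e1] at h2
            rw [← h1, ← h2] at hadj2
            exact hnadj j hadj2.symm
    have fwlift : ∀ i2, istar ≤ i2 → i2 < t → Efw χ H (p i2) (p (i2+1)) →
        Efw χ Htil (p i2) (p (i2+1)) := by
      intro i2 h1 h2 hf
      refine ⟨hf.1, ?_, hf.2.2⟩
      intro j2
      by_cases hj2 : j2 = j
      · rw [hj2, Htil_j]
        exact notPadj i2 h1 h2 hf.2.1
      · rw [Htil_ne j2 hj2]
        exact hf.2.1 j2
    have bwlift : ∀ i2, istar ≤ i2 → i2 < t → Ebw χ H (p i2) (p (i2+1)) →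
        Ebw χ Htil (p i2) (p (i2+1)) := by
      intro i2 h1 h2 hb
      obtain ⟨⟨j2, hadj2⟩, ii2, hb1, hb2⟩ := hb
      by_cases hj2 : j2 = j
      · rw [hj2] at hadj2
        have e1 : p i2 = avtx hAj ii2.succ := avtx_unique hAj hadj2.fst_mem hb1
        have e2 : p (i2+1) = avtx hAj ii2.castSucc := avtx_unique hAj hadj2.snd_mem hb2
        have hge : m ≤ (ii2.castSucc : ℕ) := by
          by_contra hlow
          exact hmax (i2+1) (by omega) (by omega) ii2.castSucc (by omega) e2
        refine ⟨⟨j, ?_⟩, ii2, hb1, hb2⟩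
        rw [Htil_j]
        refine ⟨ii2, Or.inr ⟨?_, ?_⟩⟩
        · rw [fval_ge _ (by simp only [Fin.val_succ]; simp only [Fin.coe_castSucc] at hge; omega)]
          exact e1
        · rw [fval_ge _ hge]
          exact e2
      · exact ⟨⟨j2, by rw [Htil_ne j2 hj2]; exact hadj2⟩, ii2, hb1, hb2⟩
    have fwdown : ∀ i2, istar ≤ i2 → i2 < t → Efw χ Htil (p i2) (p (i2+1)) →
        Efw χ H (p i2) (p (i2+1)) := by
      intro i2 h1 h2 hf
      obtain ⟨hGadj, hnadj, ii2, hc1, hc2⟩ := hf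
      refine ⟨hGadj, ?_, ii2, hc1, hc2⟩
      intro j2 hadj2
      by_cases hj2 : j2 = j
      · rw [hj2] at hadj2
        have e1 : p i2 = avtx hAj ii2.castSucc := avtx_unique hAj hadj2.fst_mem hc1
        have e2 : p (i2+1) = avtx hAj ii2.succ := avtx_unique hAj hadj2.snd_mem hc2
        rcases Nat.lt_or_ge (ii2.castSucc : ℕ) m with hlow | hhigh
        · rcases Nat.lt_or_ge istar i2 with hcc | hcc
          · exact hmax i2 hcc (by omega) ii2.castSucc hlow e1
          · rcases Nat.lt_or_ge ((ii2.succ : ℕ)) m with hlow2 | hhigh2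
            · exact hmax (i2+1) (by omega) (by omega) ii2.succ hlow2 e2
            · have e3 : p (i2+1) = p m := by
                rw [e2, pmu]
                congr 1
                refine Fin.ext ?_
                simp only [Fin.val_succ] at hhigh2 ⊢
                simp only [Fin.coe_castSucc] at hlow
                omega
              have h3 := pinj _ _ (by omega) (by omega) e3
              omega
        · apply hnadj j
          rw [Htil_j]
          refine ⟨ii2, Or.inl ⟨?_, ?_⟩⟩
          · rw [fval_ge _ hhigh]
            exact e1
          · rw [fval_ge _ (by simp only [Fin.val_succ]; simp only [Fin.coe_castSucc] at hhigh; omega)]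
            exact e2
      · rw [← Htil_ne j2 hj2] at hadj2
        exact hnadj j2 hadj2
    have memdown : ∀ i2, istar < i2 → i2 ≤ t → (∃ j2, p i2 ∈ (Htil j2).verts) →
        ∃ j2, p i2 ∈ (H j2).verts := by
      rintro i2 h1 h2 ⟨j2, hmem⟩
      by_cases hj2 : j2 = j
      · rw [hj2, Htil_j, hPverts] at hmem
        rcases hrangef _ hmem with ⟨a, ha, heq⟩ | ⟨c, hc, heq⟩
        · exfalso
          have h3 := pinj _ _ (by omega) (by omega) heq
          omega
        · exact ⟨j, by rw [heq]; exact avtx_mem hAj c⟩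
      · rw [Htil_ne j2 hj2] at hmem
        exact ⟨j2, hmem⟩
    have hX' : ({avtx hAj 0} : Set V) ⊆ {w | χ w = 0} \ Vcol χ Htil 0 := by
      intro w hw
      rw [Set.mem_singleton_iff] at hw
      subst hw
      refine ⟨avtx_color hAj 0, ?_⟩
      rintro ⟨⟨j2, hmem⟩, -⟩
      exact uLowNot 0 (by simp only [Fin.val_zero]; omega) j2 hmem
    have harcq : ∀ r, r < tq → Efw χ Htil (q r) (q (r+1)) ∨ Ebw χ Htil (q r) (q (r+1)) := by
      intro r hr
      rcases Nat.lt_or_ge r cv with h | h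
      · left
        have e1 : q r = avtx hAj ⟨r, by omega⟩ := qlt r h
        have e2 : q (r+1) = avtx hAj ⟨r+1, by omega⟩ := quval (r+1) (by omega)
        rw [e1, e2]
        refine ⟨(avtx_adj hAj rfl).adj_sub, ?_, ⟨⟨r, by omega⟩, ?_, ?_⟩⟩
        · intro j2 hadj2
          exact uLowNot _ (show r < m by omega) j2 hadj2.fst_mem
        · rw [avtx_color hAj]
          exact Fin.ext rfl
        · rw [avtx_color hAj]
          exact Fin.ext rfl
      · have e1 : q r = p (istar + r - cv) := qge r h
        have e2 : q (r+1) = p (istar + r - cv + 1) := by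
          rw [qge (r+1) (by omega)]
          congr 1
          omega
        rw [e1, e2]
        rcases harc (istar + r - cv) (by omega) with hf | hb
        · exact Or.inl (fwlift _ (by omega) (by omega) hf)
        · exact Or.inr (bwlift _ (by omega) (by omega) hb)
    have hadmq : ∀ r, r < tq → Efw χ Htil (q r) (q (r+1)) →
        (∃ j2, q (r+1) ∈ (Htil j2).verts) →
        r + 1 < tq ∧ Ebw χ Htil (q (r+1)) (q (r+2)) := by
      intro r hr hf hmem
      rcases Nat.lt_or_ge r cv with h | h
      · exfalso
        obtain ⟨j2, hmem2⟩ := hmem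
        rw [quval (r+1) (by omega)] at hmem2
        exact uLowNot _ (show r + 1 < m by omega) j2 hmem2
      · have e1 : q r = p (istar + r - cv) := qge r h
        have e2 : q (r+1) = p (istar + r - cv + 1) := by
          rw [qge (r+1) (by omega)]
          congr 1
          omega
        have e3 : q (r+2) = p (istar + r - cv + 2) := by
          rw [qge (r+2) (by omega)]
          congr 1
          omega
        rw [e1, e2] at hf
        rw [e2] at hmem
        obtain ⟨hlt, hb⟩ := hadm (istar + r - cv) (by omega)
          (fwdown _ (by omega) (by omega) hf)
          (memdown _ (by omega) (by omega) hmem)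
        refine ⟨by omega, ?_⟩
        rw [e2, e3]
        exact bwlift (istar + r - cv + 1) (by omega) (by omega) hb
    have hvext := IH tq htq_lt Htil hagree' hdisj' {avtx hAj 0} hX' q hinjq hstartq
      hqend harcq hadmq
    obtain ⟨-, H', hA', hD', ⟨x, hxmem, hV0⟩, hVlast⟩ := hvext
    rw [Set.mem_singleton_iff] at hxmem
    subst hxmem
    refine ⟨hv, H', hA', hD', ⟨p 0, hstart, ?_⟩, ?_⟩
    · rw [hV0]
      ext w
      simp only [Set.mem_union, Set.mem_singleton_iff]
      constructor
      · rintro (⟨⟨j2, hmem⟩, hcol⟩ | heq)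
        · by_cases hj2 : j2 = j
          · rw [hj2, Htil_j, hPverts] at hmem
            rcases hrangef _ hmem with ⟨a, ha, rfl⟩ | ⟨c, hc, rfl⟩
            · right
              have h0 := colornat a (by omega)
              rw [hcol] at h0
              simp only [Fin.val_zero] at h0
              rw [← h0]
            · exfalso
              rw [avtx_color hAj c] at hcol
              have h3 := congrArg Fin.val hcol
              simp only [Fin.val_zero] at h3
              omega
          · rw [Htil_ne j2 hj2] at hmem
            exact Or.inl ⟨⟨j2, hmem⟩, hcol⟩
        · left
          rw [heq]
          exact ⟨⟨j, avtx_mem hAj 0⟩, avtx_color hAj 0⟩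
      · rintro (⟨⟨j2, hmem⟩, hcol⟩ | heq)
        · by_cases hj2 : j2 = j
          · rw [hj2] at hmem
            exact Or.inr (avtx_unique hAj hmem hcol)
          · exact Or.inl ⟨⟨j2, by rw [Htil_ne j2 hj2]; exact hmem⟩, hcol⟩
        · left
          rw [heq]
          refine ⟨⟨j, ?_⟩, hχ0⟩
          rw [Htil_j, hPverts]
          refine ⟨0, ?_⟩
          rw [fval_lt 0 (by simp only [Fin.val_zero]; omega)]
          congr 1
    · rw [hVlast]
      have hVeq : Vcol χ Htil (Fin.last s) = Vcol χ H (Fin.last s) := by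
        ext w
        constructor
        · rintro ⟨⟨j2, hmem⟩, hcol⟩
          by_cases hj2 : j2 = j
          · rw [hj2, Htil_j, hPverts] at hmem
            rcases hrangef _ hmem with ⟨a, ha, rfl⟩ | ⟨c, hc, rfl⟩
            · exfalso
              have h0 := colornat a (by omega)
              rw [hcol] at h0
              simp only [Fin.val_last] at h0
              omega
            · exact ⟨⟨j, avtx_mem hAj c⟩, hcol⟩
          · rw [Htil_ne j2 hj2] at hmem
            exact ⟨⟨j2, hmem⟩, hcol⟩
        · rintro ⟨⟨j2, hmem⟩, hcol⟩
          by_cases hj2 : j2 = j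
          · rw [hj2] at hmem
            refine ⟨⟨j, ?_⟩, hcol⟩
            rw [Htil_j, hPverts, avtx_unique hAj hmem hcol]
            exact ⟨Fin.last s, fval_ge (Fin.last s) (by simp only [Fin.val_last]; omega)⟩
          · exact ⟨⟨j2, by rw [Htil_ne j2 hj2]; exact hmem⟩, hcol⟩
      rw [hVeq]
  · -- base case : all arcs forward
    push_neg at hbw
    have allfw : ∀ i, i < t → Efw χ H (p i) (p (i+1)) := by
      intro i hi
      rcases harc i hi with h | h
      · exact h
      · exact absurd h (hbw i hi)
    have colornat : ∀ i, i ≤ t → (χ (p i) : ℕ) = i := by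
      intro i
      induction i with
      | zero => intro _; rw [hχ0]; rfl
      | succ n ihn =>
        intro hn
        obtain ⟨ii, h1, h2⟩ := (allfw n (by omega)).2.2
        have hv1 := ihn (by omega)
        rw [h1] at hv1
        rw [h2]
        simp only [Fin.val_succ]
        simp only [Fin.coe_castSucc] at hv1
        omega
    have hts : t = s := by
      have h1 := colornat t le_rfl
      rw [hend, hv] at h1
      simp only [Fin.val_last] at h1
      omega
    subst hts
    have pnotH : ∀ i, i ≤ t → ∀ j', p i ∉ (H j').verts := by
      intro i hit j' hmem
      match i with
      | 0 => exact hp0H j' hmem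
      | Nat.succ n =>
        have hf := allfw n (by omega)
        obtain ⟨hlt, hb⟩ := hadm n (by omega) hf ⟨j', hmem⟩
        exact notboth _ _ (allfw (n+1) (by omega)) hb
    have gadj : ∀ ii : Fin t, G.Adj ((fun c : Fin (t+1) => p (c : ℕ)) ii.castSucc)
        ((fun c : Fin (t+1) => p (c : ℕ)) ii.succ) := by
      intro ii
      simpa using (allfw (ii : ℕ) ii.2).1
    have gχ : ∀ c : Fin (t+1), χ ((fun c : Fin (t+1) => p (c : ℕ)) c) = c := by
      intro c
      exact Fin.ext (colornat (c : ℕ) (by omega))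
    have hPd : ∀ j0, Disjoint (pathSub (fun c : Fin (t+1) => p (c : ℕ)) gadj).verts (H j0).verts := by
      intro j0
      rw [pathSub_verts, Set.disjoint_left]
      rintro w ⟨c, rfl⟩ hw
      exact pnotH (c : ℕ) (by omega) j0 hw
    obtain ⟨H', h1, h2, h3⟩ := extend_system H (pathSub (fun c : Fin (t+1) => p (c : ℕ)) gadj) hagree
      (pathSub_agrees (fun c : Fin (t+1) => p (c : ℕ)) gadj gχ) hdisj hPd
    refine ⟨hv, H', h1, h2, ⟨p 0, hstart, ?_⟩, ?_⟩
    · rw [h3 0]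
      congr 1
      ext w
      simp only [pathSub_verts, Set.mem_setOf_eq, Set.mem_singleton_iff]
      constructor
      · rintro ⟨⟨c, rfl⟩, hc⟩
        have := gχ c
        rw [hc] at this
        have hc0 : c = 0 := this.symm
        rw [hc0]
        simp
      · rintro rfl
        refine ⟨⟨0, ?_⟩, hχ0⟩
        simp
    · rw [h3 (Fin.last t)]
      congr 1
      ext w
      simp only [pathSub_verts, Set.mem_setOf_eq, Set.mem_singleton_iff]
      constructor
      · rintro ⟨⟨c, rfl⟩, hc⟩
        have := gχ c
        rw [hc] at this
        have hcl : c = Fin.last t := this.symm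
        rw [hcl]
        simpa using hend
      · rintro rfl
        refine ⟨⟨Fin.last t, ?_⟩, hv⟩
        simpa using hend
end

section
/- Let h ≥ 1 and let D ≥ 1 be such that every finite graph excluding K_h as a minor has average degree at most D. Let G = (V1, V2, E) be a bipartite graph that excludes K_h as a minor and satisfies |V2| > D·|V1|. Let F be a non-empty set of 2-element subsets of V1, and suppose the incidence bipartite graph B with parts V2 and F, in which u ∈ V2 is adjacent to {v1, v2} ∈ F if and only if u is a common neighbor of v1 and v2 in G, is biregular with all degrees at least 1. Then the graph H = (V1, F) is a minor of G. -/
lemma star_connected {V : Type} (G : SimpleGraph V) (s : Set V) (c : V) (hc : c ∈ s)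
    (hstar : ∀ x ∈ s, x = c ∨ G.Adj c x) : (G.induce s).Connected := by
  rw [SimpleGraph.connected_iff]
  refine ⟨?_, ⟨⟨c, hc⟩⟩⟩
  have key : ∀ z : s, (G.induce s).Reachable z ⟨c, hc⟩ := by
    rintro ⟨z, hz⟩
    rcases hstar z hz with rfl | hadj
    · exact SimpleGraph.Reachable.refl _
    · exact SimpleGraph.Adj.reachable (by exact hadj.symm)
  intro x y
  exact (key x).trans (key y).symm

lemma union_connected {V W : Type} (G : SimpleGraph V) (M : SimpleGraph W) (P : W → Set V)
    (hconn : ∀ v, (G.induce (P v)).Connected)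
    (hadj : ∀ v w, M.Adj v w → ∃ x ∈ P v, ∃ y ∈ P w, G.Adj x y)
    (C : Set W) (hC : (M.induce C).Connected) :
    (G.induce (⋃ v ∈ C, P v)).Connected := by
  set Q : Set V := ⋃ v ∈ C, P v with hQ
  have hsub : ∀ v ∈ C, P v ⊆ Q := fun v hv => Set.subset_biUnion_of_mem hv
  have piece : ∀ (v : W) (hv : v ∈ C) (x y : V) (hx : x ∈ P v) (hy : y ∈ P v),
      (G.induce Q).Reachable ⟨x, hsub v hv hx⟩ ⟨y, hsub v hv hy⟩ := by
    intro v hv x y hx hy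
    have h1 := (hconn v).preconnected ⟨x, hx⟩ ⟨y, hy⟩
    have h2 := h1.map (G.induceHomOfLE (hsub v hv)).toHom
    exact h2
  have main : ∀ (a b : C) (p : (M.induce C).Walk a b) (x : V) (hx : x ∈ P a.1) (y : V)
      (hy : y ∈ P b.1),
      (G.induce Q).Reachable ⟨x, hsub a.1 a.2 hx⟩ ⟨y, hsub b.1 b.2 hy⟩ := by
    intro a b p
    induction p with
    | @nil a => intro x hx y hy; exact piece a.1 a.2 x y hx hy
    | @cons a c b hadj' p ih =>
      intro x hx y hy
      obtain ⟨x', hx', y', hy', hxy⟩ := hadj a.1 c.1 hadj'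
      have r1 := piece a.1 a.2 x x' hx hx'
      have r2 : (G.induce Q).Adj ⟨x', hsub a.1 a.2 hx'⟩ ⟨y', hsub c.1 c.2 hy'⟩ := hxy
      have r3 := ih y' hy' y hy
      exact (r1.trans r2.reachable).trans r3
  rw [SimpleGraph.connected_iff]
  constructor
  · rintro ⟨x, hx⟩ ⟨y, hy⟩
    obtain ⟨v, hv, hxv⟩ := Set.mem_iUnion₂.mp hx
    obtain ⟨w, hw, hyw⟩ := Set.mem_iUnion₂.mp hy
    obtain ⟨p⟩ := hC.preconnected ⟨v, hv⟩ ⟨w, hw⟩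
    exact main ⟨v, hv⟩ ⟨w, hw⟩ p x hxv y hyw
  · obtain ⟨v0⟩ := hC.nonempty
    obtain ⟨x0⟩ := (hconn v0.1).nonempty
    exact ⟨⟨x0.1, hsub v0.1 v0.2 x0.2⟩⟩

open Finset in
lemma hall_cond {ι κ : Type} [DecidableEq ι] [DecidableEq κ] (t : ι → Finset κ) (n m : ℕ)
    (hm : 1 ≤ m) (hnm : m ≤ n)
    (hlow : ∀ i, n ≤ (t i).card)
    (hupper : ∀ (S : Finset ι), ∀ k ∈ S.biUnion t, (S.filter (fun i => k ∈ t i)).card ≤ m)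
    (S : Finset ι) : S.card ≤ (S.biUnion t).card := by
  have key : S.card * n ≤ (S.biUnion t).card * m := by
    calc S.card * n = ∑ _i ∈ S, n := by rw [Finset.sum_const, smul_eq_mul]
    _ ≤ ∑ i ∈ S, (t i).card := Finset.sum_le_sum (fun i _ => hlow i)
    _ = ∑ i ∈ S, ((S.biUnion t).filter (fun k => k ∈ t i)).card := by
        refine Finset.sum_congr rfl fun i hi => ?_
        congr 1
        ext k
        simp only [Finset.mem_filter, Finset.mem_biUnion]
        exact ⟨fun hk => ⟨⟨i, hi, hk⟩, hk⟩, fun hk => hk.2⟩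
    _ = ∑ i ∈ S, ∑ k ∈ S.biUnion t, if k ∈ t i then 1 else 0 :=
        Finset.sum_congr rfl fun i _ => Finset.card_filter _ _
    _ = ∑ k ∈ S.biUnion t, ∑ i ∈ S, if k ∈ t i then 1 else 0 := Finset.sum_comm
    _ = ∑ k ∈ S.biUnion t, (S.filter (fun i => k ∈ t i)).card :=
        Finset.sum_congr rfl fun k _ => (Finset.card_filter _ _).symm
    _ ≤ ∑ k ∈ S.biUnion t, m := Finset.sum_le_sum (hupper S)
    _ = (S.biUnion t).card * m := by rw [Finset.sum_const, smul_eq_mul]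
  have key2 : S.card * n ≤ (S.biUnion t).card * n :=
    key.trans (Nat.mul_le_mul_left _ hnm)
  exact Nat.le_of_mul_le_mul_right (by simpa [mul_comm] using key2) (hm.trans hnm)

def SimpleGraph.IsMinorOf {W V : Type} (H : SimpleGraph W) (G : SimpleGraph V) : Prop :=
  ∃ B : W → Set V,
    (∀ u, (G.induce (B u)).Connected) ∧
    (Pairwise fun u u' => Disjoint (B u) (B u')) ∧
    (∀ u u', H.Adj u u' → ∃ x ∈ B u, ∃ y ∈ B u', G.Adj x y)

/-- Lemma 4.5 (core step): let `h ≥ 1` and let `D ≥ 1` be such that every finite graph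
excluding `K_h` as a minor has average degree at most `D`. Let `G` be a bipartite graph
with parts `V₁ = α` and `V₂ = β` excluding `K_h` as a minor with `|V₂| > D·|V₁|`.
Let `F` be a non-empty set of 2-element subsets of `V₁` (encoded as the edge set of a
graph `H` on `V₁`), and suppose the incidence graph between `V₂` and `F`, joining
`u ∈ V₂` to `{v₁,v₂} ∈ F` iff `u` is a common neighbor of `v₁` and `v₂` in `G`, is
biregular with all degrees at least 1. Then `H = (V₁, F)` is a minor of `G`. -/
theorem minor_of_biregular_incidence
    {α β : Type} [Fintype α] [Fintype β] (h : ℕ) (hh : 1 ≤ h) (D : ℝ) (hD : 1 ≤ D)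
    (havg : ∀ (W : Type) [Fintype W] (G' : SimpleGraph W),
      ¬ (⊤ : SimpleGraph (Fin h)).IsMinorOf G' →
      (∑ w : W, ({x | G'.Adj w x} : Set W).ncard : ℝ) ≤ D * Fintype.card W)
    (G : SimpleGraph (α ⊕ β))
    (hbip : (∀ x y : α, ¬ G.Adj (Sum.inl x) (Sum.inl y)) ∧
            (∀ x y : β, ¬ G.Adj (Sum.inr x) (Sum.inr y)))
    (hexcl : ¬ (⊤ : SimpleGraph (Fin h)).IsMinorOf G)
    (hsize : D * Fintype.card α < Fintype.card β)
    (H : SimpleGraph α) (hFne : ∃ e, e ∈ H.edgeSet)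
    (d1 d2 : ℕ) (hd1 : 1 ≤ d1) (hd2 : 1 ≤ d2)
    (hdeg1 : ∀ u : β,
      ({e : Sym2 α | e ∈ H.edgeSet ∧ ∀ x ∈ e, G.Adj (Sum.inl x) (Sum.inr u)}).ncard = d1)
    (hdeg2 : ∀ e ∈ H.edgeSet,
      ({u : β | ∀ x ∈ e, G.Adj (Sum.inl x) (Sum.inr u)}).ncard = d2) :
    H.IsMinorOf G := by
  classical
  -- Finset versions of the degree hypotheses
  set ED : β → Finset (Sym2 α) :=
    fun u => Finset.univ.filter
      (fun e => e ∈ H.edgeSet ∧ ∀ x ∈ e, G.Adj (Sum.inl x) (Sum.inr u)) with hED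
  set CN : Sym2 α → Finset β :=
    fun e => Finset.univ.filter (fun u => ∀ x ∈ e, G.Adj (Sum.inl x) (Sum.inr u)) with hCN
  have hEDcard : ∀ u, (ED u).card = d1 := by
    intro u
    have h1 := hdeg1 u
    have h2 : ({e : Sym2 α | e ∈ H.edgeSet ∧ ∀ x ∈ e, G.Adj (Sum.inl x) (Sum.inr u)})
        = ↑(ED u) := by
      ext e; simp [hED]
    rwa [h2, Set.ncard_coe_finset] at h1
  have hCNcard : ∀ e ∈ H.edgeSet, (CN e).card = d2 := by
    intro e he
    have h1 := hdeg2 e he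
    have h2 : ({u : β | ∀ x ∈ e, G.Adj (Sum.inl x) (Sum.inr u)}) = ↑(CN e) := by
      ext u; simp [hCN]
    rwa [h2, Set.ncard_coe_finset] at h1
  -- Step A : d1 ≤ d2
  have hd12 : d1 ≤ d2 := by
    by_contra hlt
    push_neg at hlt
    -- Hall's condition on the β side
    have hall : ∀ T : Finset β, T.card ≤ (T.biUnion ED).card := by
      refine hall_cond ED d1 d2 hd2 hlt.le (fun u => (hEDcard u).ge) ?_
      intro T e heN
      obtain ⟨u0, _, hu0⟩ := Finset.mem_biUnion.mp heN
      have heE : e ∈ H.edgeSet := (Finset.mem_filter.mp hu0).2.1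
      rw [← hCNcard e heE]
      refine Finset.card_le_card ?_
      intro u hu
      exact Finset.mem_filter.mpr ⟨Finset.mem_univ u,
        (Finset.mem_filter.mp (Finset.mem_filter.mp hu).2).2.2⟩
    obtain ⟨g, hginj, hgmem⟩ :=
      (Finset.all_card_le_biUnion_card_iff_exists_injective ED).mp hall
    have hgE : ∀ u, g u ∈ H.edgeSet := fun u => (Finset.mem_filter.mp (hgmem u)).2.1
    have hgA : ∀ u, ∀ x ∈ g u, G.Adj (Sum.inl x) (Sum.inr u) :=
      fun u => (Finset.mem_filter.mp (hgmem u)).2.2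
    -- the contracted minor M of G
    set M : SimpleGraph α := SimpleGraph.fromEdgeSet {e | ∃ u, g u = e} with hM
    -- branch sets realizing M as a minor of G
    set P : α → Set (α ⊕ β) :=
      fun v => insert (Sum.inl v) {x | ∃ u, (g u).out.1 = v ∧ x = Sum.inr u} with hP
    have hPconn : ∀ v, (G.induce (P v)).Connected := by
      intro v
      refine star_connected G (P v) (Sum.inl v) (Set.mem_insert _ _) ?_
      intro x hx
      rcases hx with rfl | ⟨u, hu, rfl⟩
      · exact Or.inl rfl
      · exact Or.inr (hgA u _ (hu ▸ Sym2.out_fst_mem (g u)))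
    have hPdisj : ∀ v w, v ≠ w → Disjoint (P v) (P w) := by
      intro v w hvw
      rw [Set.disjoint_left]
      rintro x (rfl | ⟨u, hu, rfl⟩) hxw
      · rcases hxw with hh' | ⟨u', _, hu'⟩
        · exact hvw (Sum.inl_injective hh')
        · exact (Sum.inl_ne_inr hu').elim
      · rcases hxw with hh' | ⟨u', hu', he⟩
        · exact (Sum.inl_ne_inr hh'.symm).elim
        · exact hvw (hu ▸ hu' ▸ congrArg (fun z => (g z).out.1) (Sum.inr_injective he).symm ▸ rfl)
    have hPadj : ∀ v w, M.Adj v w → ∃ x ∈ P v, ∃ y ∈ P w, G.Adj x y := by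
      intro v w hvw
      rw [hM, SimpleGraph.fromEdgeSet_adj] at hvw
      obtain ⟨⟨u, hu⟩, hne⟩ := hvw
      have hmem : (g u).out.1 ∈ g u := Sym2.out_fst_mem (g u)
      rw [hu] at hmem
      rcases Sym2.mem_iff.mp hmem with h1 | h1
      · exact ⟨Sum.inr u, Or.inr ⟨u, by rw [hu]; exact h1, rfl⟩, Sum.inl w,
          Set.mem_insert _ _, (hgA u w (by rw [hu]; exact Sym2.mem_mk_right v w)).symm⟩
      · exact ⟨Sum.inl v, Set.mem_insert _ _, Sum.inr u,
          Or.inr ⟨u, by rw [hu]; exact h1, rfl⟩, hgA u v (by rw [hu]; exact Sym2.mem_mk_left v w)⟩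
    -- M excludes K_h
    have hMexcl : ¬ (⊤ : SimpleGraph (Fin h)).IsMinorOf M := by
      rintro ⟨Bs, hBconn, hBdisj, hBedge⟩
      refine hexcl ⟨fun i => ⋃ v ∈ Bs i, P v, ?_, ?_, ?_⟩
      · intro i
        exact union_connected G M P hPconn hPadj (Bs i) (hBconn i)
      · intro i j hij
        rw [Set.disjoint_left]
        intro x hxi hxj
        obtain ⟨v, hv, hxv⟩ := Set.mem_iUnion₂.mp hxi
        obtain ⟨w, hw, hxw⟩ := Set.mem_iUnion₂.mp hxj
        have hvw : v ≠ w := by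
          rintro rfl
          exact Set.disjoint_left.mp (hBdisj hij) hv hw
        exact Set.disjoint_left.mp (hPdisj v w hvw) hxv hxw
      · intro i j hij
        obtain ⟨v, hv, w, hw, hvw⟩ := hBedge i j hij
        obtain ⟨x, hx, y, hy, hxy⟩ := hPadj v w hvw
        exact ⟨x, Set.mem_biUnion hv hx, y, Set.mem_biUnion hw hy, hxy⟩
    -- counting contradiction
    have hMdeg : ∀ w, ({x | M.Adj w x} : Set α).ncard = M.degree w := by
      intro w
      rw [show ({x | M.Adj w x} : Set α) = ↑(M.neighborFinset w) by ext x; simp,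
        Set.ncard_coe_finset]
      rfl
    have hgME : ∀ u, g u ∈ M.edgeSet := by
      intro u
      rw [hM, SimpleGraph.edgeSet_fromEdgeSet]
      exact ⟨⟨u, rfl⟩, fun hd => (H.not_isDiag_of_mem_edgeSet (hgE u)) hd⟩
    have hMedges : Fintype.card β ≤ M.edgeSet.ncard := by
      have hinj : Function.Injective (fun u : β => (⟨g u, hgME u⟩ : M.edgeSet)) := by
        intro u u' huu'
        exact hginj (congrArg Subtype.val huu')
      have := Nat.card_le_card_of_injective _ hinj
      rwa [Nat.card_eq_fintype_card, Nat.card_coe_set_eq] at this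
    have hsumdeg : 2 * Fintype.card β ≤ ∑ w : α, M.degree w := by
      rw [SimpleGraph.sum_degrees_eq_twice_card_edges, SimpleGraph.edgeFinset,
        ← Set.ncard_eq_toFinset_card']
      omega
    have hsum : 2 * Fintype.card β ≤ ∑ w : α, ({x | M.Adj w x} : Set α).ncard := by
      rw [show (∑ w : α, ({x | M.Adj w x} : Set α).ncard) = ∑ w : α, M.degree w from
        Finset.sum_congr rfl fun w _ => hMdeg w]
      exact hsumdeg
    have hle := havg α M hMexcl
    have hcast : ((2 * Fintype.card β : ℕ) : ℝ)
        ≤ (∑ w : α, (({x | M.Adj w x} : Set α).ncard : ℝ)) := by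
      rw [← Nat.cast_sum]
      exact_mod_cast hsum
    push_cast at hcast
    have hb : (0 : ℝ) ≤ (Fintype.card β : ℝ) := by positivity
    linarith
  -- Step B : Hall's condition on the edge side, and the SDR
  have hall : ∀ S : Finset {e : Sym2 α // e ∈ H.edgeSet},
      S.card ≤ (S.biUnion (fun e => CN e.1)).card := by
    refine hall_cond _ d2 d1 hd1 hd12 (fun e => (hCNcard e.1 e.2).ge) ?_
    intro S u _
    rw [← hEDcard u]
    refine Finset.card_le_card_of_injOn Subtype.val ?_ (Set.injOn_of_injective Subtype.val_injective)
    intro e he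
    obtain ⟨heS, heCN⟩ := Finset.mem_filter.mp he
    show (e.1 : Sym2 α) ∈ ED u
    simp only [hED, Finset.mem_filter, Finset.mem_univ, true_and]
    exact ⟨e.2, (Finset.mem_filter.mp heCN).2⟩
  obtain ⟨f, hfinj, hfmem⟩ :=
    (Finset.all_card_le_biUnion_card_iff_exists_injective (fun e : {e : Sym2 α // e ∈ H.edgeSet} => CN e.1)).mp hall
  have hfA : ∀ e : {e : Sym2 α // e ∈ H.edgeSet}, ∀ x ∈ e.1,
      G.Adj (Sum.inl x) (Sum.inr (f e)) :=
    fun e => (Finset.mem_filter.mp (hfmem e)).2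
  -- the branch sets
  set B : α → Set (α ⊕ β) :=
    fun v => insert (Sum.inl v)
      {x | ∃ e : {e : Sym2 α // e ∈ H.edgeSet}, e.1.out.1 = v ∧ x = Sum.inr (f e)} with hB
  refine ⟨B, ?_, ?_, ?_⟩
  · intro v
    refine star_connected G (B v) (Sum.inl v) (Set.mem_insert _ _) ?_
    intro x hx
    rcases hx with rfl | ⟨e, he, rfl⟩
    · exact Or.inl rfl
    · exact Or.inr (hfA e _ (he ▸ Sym2.out_fst_mem e.1))
  · intro v w hvw
    rw [Set.disjoint_left]
    rintro x (rfl | ⟨e, he, rfl⟩) hxw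
    · rcases hxw with hh' | ⟨e', _, he'⟩
      · exact hvw (Sum.inl_injective hh')
      · exact (Sum.inl_ne_inr he').elim
    · rcases hxw with hh' | ⟨e', he', heq⟩
      · exact (Sum.inl_ne_inr hh'.symm).elim
      · have : e = e' := hfinj (Sum.inr_injective heq)
        exact hvw (he ▸ this ▸ he' ▸ rfl)
  · intro v w hvw
    have hmemE : s(v, w) ∈ H.edgeSet := H.mem_edgeSet.mpr hvw
    set e : {e : Sym2 α // e ∈ H.edgeSet} := ⟨s(v, w), hmemE⟩ with he
    have hmem : e.1.out.1 ∈ e.1 := Sym2.out_fst_mem e.1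
    rcases Sym2.mem_iff.mp hmem with h1 | h1
    · exact ⟨Sum.inr (f e), Or.inr ⟨e, h1, rfl⟩, Sum.inl w, Set.mem_insert _ _,
        (hfA e w (Sym2.mem_mk_right v w)).symm⟩
    · exact ⟨Sum.inl v, Set.mem_insert _ _, Sum.inr (f e), Or.inr ⟨e, h1, rfl⟩,
        hfA e v (Sym2.mem_mk_left v w)⟩
end

section
/- Let G be a finite graph, h ≥ 1, and let v_1, …, v_h be distinct vertices of G. Suppose there exist k ≥ h(h−1)/2 pairwise vertex-disjoint connected subgraphs H_1, …, H_k of G − {v_1, …, v_h} such that for every p ∈ [k] and every i ∈ [h], the subgraph H_p contains at least one vertex adjacent in G to v_i. Then K_h is a topological subgraph of G. -/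
/-- `H` is a topological subgraph of `G` (i.e. a subdivision of `H` is a subgraph of `G`):
there is an injective map `f` on branch vertices and, for each edge of `H`, a path in `G`
between the images of its endpoints such that the internal vertices of these paths avoid
the branch vertices and the paths for distinct edges are internally vertex-disjoint. -/
def SimpleGraph.IsTopologicalSubgraphOf {W V : Type} (H : SimpleGraph W) (G : SimpleGraph V) :
    Prop :=
  ∃ (f : W → V) (P : ∀ u v : W, H.Adj u v → G.Walk (f u) (f v)),
    Function.Injective f ∧
    (∀ u v huv, (P u v huv).IsPath) ∧
    (∀ u v huv, ∀ w ∈ (P u v huv).support.tail.dropLast, w ∉ Set.range f) ∧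
    (∀ u v huv u' v' huv', s(u, v) ≠ s(u', v') →
      ∀ w ∈ (P u v huv).support.tail.dropLast, w ∉ (P u' v' huv').support.tail.dropLast)

/-- If `v_1, …, v_h` are distinct vertices of a finite graph `G` and there are
`k ≥ h(h−1)/2` pairwise vertex-disjoint connected subgraphs of `G − {v_1, …, v_h}`,
each containing a neighbor of every `v_i`, then `K_h` is a topological subgraph of `G`. -/
theorem cliqueTopologicalSubgraph_of_disjoint_connected_pieces
    {V : Type} [Fintype V] (G : SimpleGraph V) (h k : ℕ) (hh : 1 ≤ h)
    (hk : h * (h - 1) / 2 ≤ k) (v : Fin h → V) (hv : Function.Injective v)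
    (H : Fin k → G.Subgraph)
    (hconn : ∀ p, (H p).Connected)
    (havoid : ∀ p, ∀ i, v i ∉ (H p).verts)
    (hdisj : Pairwise fun p q => Disjoint (H p).verts (H q).verts)
    (htouch : ∀ p, ∀ i, ∃ w ∈ (H p).verts, G.Adj w (v i)) :
    (⊤ : SimpleGraph (Fin h)).IsTopologicalSubgraphOf G := by
  classical
  -- embedding of nondiagonal pairs into pieces
  have hcard : Fintype.card {s : Sym2 (Fin h) // ¬ s.IsDiag} ≤ Fintype.card (Fin k) := by
    rw [Sym2.card_subtype_not_diag, Fintype.card_fin, Fintype.card_fin, Nat.choose_two_right]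
    exact hk
  obtain ⟨e⟩ := Function.Embedding.nonempty_of_card_le hcard
  choose w hw hadj using htouch
  -- connecting walks inside a piece
  have key : ∀ p (a b : V), a ∈ (H p).verts → b ∈ (H p).verts →
      ∃ q : G.Walk a b, q.IsPath ∧ ∀ x ∈ q.support, x ∈ (H p).verts := by
    intro p a b ha hb
    obtain ⟨q0⟩ := (hconn p) ⟨a, ha⟩ ⟨b, hb⟩
    refine ⟨(((q0.toPath : (H p).coe.Path ⟨a, ha⟩ ⟨b, hb⟩) : (H p).coe.Walk ⟨a, ha⟩ ⟨b, hb⟩)).map (H p).hom, ?_, ?_⟩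
    · exact SimpleGraph.Walk.map_isPath_of_injective (fun x y hxy => Subtype.ext hxy) q0.toPath.2
    · intro x hx
      replace hx : x ∈ ((q0.toPath : (H p).coe.Walk ⟨a, ha⟩ ⟨b, hb⟩).map (H p).hom).support := hx
      rw [SimpleGraph.Walk.support_map, List.mem_map] at hx
      obtain ⟨⟨y, hy⟩, _, rfl⟩ := hx
      exact hy
  -- piece assignment
  have pcadj : ∀ (a b : Fin h), a ≠ b → ¬ (s(a, b) : Sym2 (Fin h)).IsDiag := by
    intro a b hab; simpa using hab
  set pc : ∀ a b : Fin h, a ≠ b → Fin k := fun a b hab => e ⟨s(a, b), pcadj a b hab⟩ with hpc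
  -- main construction
  have main : ∀ (a b : Fin h) (hab : a ≠ b),
      ∃ q : G.Walk (v a) (v b), q.IsPath ∧
        ∀ x ∈ q.support.tail.dropLast, x ∈ (H (pc a b hab)).verts := by
    intro a b hab
    set p := pc a b hab
    obtain ⟨W, hWp, hWs⟩ := key p (w p a) (w p b) (hw p a) (hw p b)
    refine ⟨SimpleGraph.Walk.cons (hadj p a).symm (W.concat (hadj p b)), ?_, ?_⟩
    · rw [SimpleGraph.Walk.isPath_def, SimpleGraph.Walk.support_cons,
        SimpleGraph.Walk.support_concat, List.nodup_cons,
        List.nodup_append]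
      refine ⟨?_, hWp.support_nodup, ?_, ?_⟩
      · intro hmem
        rw [List.mem_append] at hmem
        rcases hmem with hmem | hmem
        · exact havoid p a (hWs _ hmem)
        · simp only [List.mem_singleton] at hmem
          exact hab (hv hmem)
      · simp
      · intro x hx
        simp only [List.mem_singleton, forall_eq]
        rintro rfl
        exact havoid p b (hWs _ hx)
    · intro x hx
      rw [SimpleGraph.Walk.support_cons, SimpleGraph.Walk.support_concat, List.tail_cons,
        List.dropLast_concat] at hx
      exact hWs _ hx
  choose P hP1 hP2 using main
  refine ⟨v, fun a b hab => P a b hab.ne, hv, fun a b hab => hP1 a b hab.ne, ?_, ?_⟩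
  · intro a b hab x hx ⟨i, hi⟩
    subst hi
    exact havoid _ i (hP2 a b hab.ne _ hx)
  · intro a b hab a' b' hab' hne x hx hx'
    have hpne : pc a b hab.ne ≠ pc a' b' hab'.ne := by
      intro hEq
      exact hne (congrArg Subtype.val (e.injective hEq))
    exact Set.disjoint_left.mp (hdisj hpne) (hP2 a b hab.ne _ hx) (hP2 a' b' hab'.ne _ hx')
end
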